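/- For the F^{(α)}-family p(x,ξ) = (1 + α ξ·h(x))^{-1/α} e^{φ(ξ)} with α > 0, the L^{(α)}-divergence of the potential φ equals the Rényi divergence of order α̃ = 1 + α with arguments interchanged: D^{(α)}[ξ : ξ'] = (1/(α̃-1)) log ∫ p(x,ξ')^{α̃} p(x,ξ)^{1-α̃} dμ(x). -/

import Mathlib

open scoped RealInnerProductSpace
open MeasureTheory

/-- The normalizing integral of the `F^{(α)}`-family. -/
noncomputable def Fint {d : ℕ} {X : Type*} [MeasurableSpace X] (μ : Measure X)
    (α : ℝ) (h : X → EuclideanSpace ℝ (Fin d))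
    (ξ : EuclideanSpace ℝ (Fin d)) : ℝ :=
  ∫ x, (1 + α * ⟪ξ, h x⟫) ^ (-(1/α)) ∂μ

/-- The `F^{(α)}`-potential `φ(ξ) = -log ∫ (1 + α ξ·h)^{-1/α} dμ`. -/
noncomputable def Fpot {d : ℕ} {X : Type*} [MeasurableSpace X] (μ : Measure X)
    (α : ℝ) (h : X → EuclideanSpace ℝ (Fin d))
    (ξ : EuclideanSpace ℝ (Fin d)) : ℝ :=
  -Real.log (Fint μ α h ξ)

/-- The density `p(x,ξ) = (1 + α ξ·h(x))^{-1/α} e^{φ(ξ)}` of the `F^{(α)}`-family. -/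
noncomputable def Fdens {d : ℕ} {X : Type*} [MeasurableSpace X] (μ : Measure X)
    (α : ℝ) (h : X → EuclideanSpace ℝ (Fin d))
    (ξ : EuclideanSpace ℝ (Fin d)) (x : X) : ℝ :=
  (1 + α * ⟪ξ, h x⟫) ^ (-(1/α)) * Real.exp (Fpot μ α h ξ)

/-- for the `F^{(α)}`-family, the `L^{(α)}`-divergence of the
potential equals the Rényi divergence of order `α̃ = 1 + α` with arguments
interchanged. -/
theorem stmt15 {d : ℕ} {X : Type*} [MeasurableSpace X] (μ : Measure X)
    [IsProbabilityMeasure μ] (α : ℝ) (hα : 0 < α)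
    (h : X → EuclideanSpace ℝ (Fin d)) (hmeas : Measurable h)
    (hh : ∀ x, ∀ i, 0 < h x i)
    (Ω : Set (EuclideanSpace ℝ (Fin d))) (hΩ : IsOpen Ω) (hconv : Convex ℝ Ω)
    (hpos : ∀ ξ ∈ Ω, ∀ x, 0 < 1 + α * ⟪ξ, h x⟫)
    (hfin : ∀ ξ ∈ Ω,
      Integrable (fun x => (1 + α * ⟪ξ, h x⟫) ^ (-(1/α))) μ)
    (Dφ : EuclideanSpace ℝ (Fin d) → EuclideanSpace ℝ (Fin d))
    (hgrad : ∀ ξ ∈ Ω, HasGradientAt (Fpot μ α h) (Dφ ξ) ξ)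
    -- the gradient is the expectation of `Z_ξ` (differentiation under the
    -- integral sign):
    (hDφ : ∀ ξ ∈ Ω, ∀ v : EuclideanSpace ℝ (Fin d),
      ⟪Dφ ξ, v⟫ =
        ∫ x, (⟪v, h x⟫ / (1 + α * ⟪ξ, h x⟫)) * Fdens μ α h ξ x ∂μ)
    (hintren : ∀ ξ ∈ Ω, ∀ ξ' ∈ Ω,
      Integrable (fun x =>
        Fdens μ α h ξ' x ^ (1 + α) * Fdens μ α h ξ x ^ (1 - (1 + α))) μ) :
    ∀ ξ ∈ Ω, ∀ ξ' ∈ Ω,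
      (1/α) * Real.log (1 + α * ⟪Dφ ξ', ξ - ξ'⟫) -
          (Fpot μ α h ξ - Fpot μ α h ξ') =
        (1/((1 + α) - 1)) * Real.log
          (∫ x, Fdens μ α h ξ' x ^ (1 + α) *
            Fdens μ α h ξ x ^ (1 - (1 + α)) ∂μ) := by
  intro ξ hξ ξ' hξ'
  have hαne : α ≠ 0 := ne_of_gt hα
  have hApos : ∀ x, 0 < 1 + α * ⟪ξ, h x⟫ := hpos ξ hξ
  have hBpos : ∀ x, 0 < 1 + α * ⟪ξ', h x⟫ := hpos ξ' hξ'
  set K : ℝ := (1 + α) * Fpot μ α h ξ' - α * Fpot μ α h ξ with hKdef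
  set f : X → ℝ := fun x => (1 + α * ⟪ξ', h x⟫) ^ (-(1/α)) with hfdef
  set w : X → ℝ := fun x => ⟪ξ - ξ', h x⟫ * (1 + α * ⟪ξ', h x⟫) ^ (-(1/α) - 1)
    with hwdef
  have hexp_rpow : ∀ c t : ℝ, Real.exp c ^ t = Real.exp (c * t) := by
    intro c t
    rw [Real.rpow_def_of_pos (Real.exp_pos c), Real.log_exp]
  -- positivity of the normalizing integral
  have hFintpos : 0 < Fint μ α h ξ' := by
    rw [Fint]
    rw [integral_pos_iff_support_of_nonneg
      (fun x => (Real.rpow_pos_of_pos (hBpos x) _).le) (hfin ξ' hξ')]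
    have hs : (Function.support fun x => (1 + α * ⟪ξ', h x⟫) ^ (-(1/α)))
        = Set.univ :=
      Set.eq_univ_of_forall fun x => (Real.rpow_pos_of_pos (hBpos x) _).ne'
    rw [hs]
    simp
  have hexpφ : Real.exp (Fpot μ α h ξ') = (Fint μ α h ξ')⁻¹ := by
    rw [Fpot, Real.exp_neg, Real.exp_log hFintpos]
  -- basic rpow identities for B x
  have hbb : ∀ x, ((1 + α * ⟪ξ', h x⟫ : ℝ)) ^ (-(1/α))
      = (1 + α * ⟪ξ', h x⟫) ^ (-(1/α) - 1) * (1 + α * ⟪ξ', h x⟫) := by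
    intro x
    rw [← Real.rpow_add_one (hBpos x).ne' (-(1/α) - 1)]
    norm_num
  have hab : ∀ x, (1 + α * ⟪ξ, h x⟫ : ℝ)
      = (1 + α * ⟪ξ', h x⟫) + α * ⟪ξ - ξ', h x⟫ := by
    intro x
    rw [inner_sub_left]
    ring
  -- the key pointwise identity for the Rényi integrand
  have key : ∀ x, Fdens μ α h ξ' x ^ (1 + α) * Fdens μ α h ξ x ^ (1 - (1 + α))
      = Real.exp K * (f x + α * w x) := by
    intro x
    have hb := hBpos x
    have ha := hApos x
    rw [Fdens, Fdens,
      Real.mul_rpow (Real.rpow_nonneg hb.le _) (Real.exp_pos _).le,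
      Real.mul_rpow (Real.rpow_nonneg ha.le _) (Real.exp_pos _).le,
      ← Real.rpow_mul hb.le, ← Real.rpow_mul ha.le, hexp_rpow, hexp_rpow]
    have e2 : -(1/α) * (1 - (1 + α)) = 1 := by field_simp; ring
    have e1 : -(1/α) * (1 + α) = -(1/α) - 1 := by field_simp; ring
    rw [e1, e2, Real.rpow_one]
    have hfx : f x = (1 + α * ⟪ξ', h x⟫) ^ (-(1/α) - 1) * (1 + α * ⟪ξ', h x⟫) :=
      hbb x
    have hKe : Real.exp (Fpot μ α h ξ' * (1 + α)) *
        Real.exp (Fpot μ α h ξ * (1 - (1 + α))) = Real.exp K := by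
      rw [← Real.exp_add, hKdef]
      ring_nf
    calc (1 + α * ⟪ξ', h x⟫) ^ (-(1/α) - 1) * Real.exp (Fpot μ α h ξ' * (1 + α))
          * ((1 + α * ⟪ξ, h x⟫) * Real.exp (Fpot μ α h ξ * (1 - (1 + α))))
        = (Real.exp (Fpot μ α h ξ' * (1 + α)) * Real.exp (Fpot μ α h ξ * (1 - (1 + α))))
            * ((1 + α * ⟪ξ', h x⟫) ^ (-(1/α) - 1) * (1 + α * ⟪ξ, h x⟫)) := by ring
      _ = Real.exp K * (f x + α * w x) := by
          rw [hKe, hab x, hfx, hwdef]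
          ring
  -- positivity of f + α w
  have hfgpos : ∀ x, 0 < f x + α * w x := by
    intro x
    have : f x + α * w x
        = (1 + α * ⟪ξ', h x⟫) ^ (-(1/α) - 1) * (1 + α * ⟪ξ, h x⟫) := by
      simp only [hfdef, hwdef]
      rw [hbb x, hab x]
      ring
    rw [this]
    exact mul_pos (Real.rpow_pos_of_pos (hBpos x) _) (hApos x)
  -- integrability
  have hint_fg : Integrable (fun x => f x + α * w x) μ := by
    have h0 := (hintren ξ hξ ξ' hξ').const_mul (Real.exp (-K))
    refine h0.congr (Filter.Eventually.of_forall fun x => ?_)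
    show Real.exp (-K) * (Fdens μ α h ξ' x ^ (1 + α) * Fdens μ α h ξ x ^ (1 - (1 + α)))
        = f x + α * w x
    rw [key x, ← mul_assoc, ← Real.exp_add, neg_add_cancel, Real.exp_zero, one_mul]
  have hint_w : Integrable w μ := by
    have h1 := (hint_fg.sub (hfin ξ' hξ')).const_mul α⁻¹
    refine h1.congr (Filter.Eventually.of_forall fun x => ?_)
    show α⁻¹ * (f x + α * w x - f x) = w x
    field_simp
    ring
  -- the gradient identity
  have hI2 : ⟪Dφ ξ', ξ - ξ'⟫ = Real.exp (Fpot μ α h ξ') * ∫ x, w x ∂μ := by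
    rw [hDφ ξ' hξ' (ξ - ξ'), ← integral_const_mul]
    refine integral_congr_ae (Filter.Eventually.of_forall fun x => ?_)
    show ⟪ξ - ξ', h x⟫ / (1 + α * ⟪ξ', h x⟫) * Fdens μ α h ξ' x
        = Real.exp (Fpot μ α h ξ') *
          (⟪ξ - ξ', h x⟫ * (1 + α * ⟪ξ', h x⟫) ^ (-(1/α) - 1))
    rw [Fdens, hbb x]
    have hcalc : ⟪ξ - ξ', h x⟫ / (1 + α * ⟪ξ', h x⟫) *
        ((1 + α * ⟪ξ', h x⟫) ^ (-(1/α) - 1) * (1 + α * ⟪ξ', h x⟫) *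
          Real.exp (Fpot μ α h ξ'))
        = ((1 + α * ⟪ξ', h x⟫) / (1 + α * ⟪ξ', h x⟫)) *
          (Real.exp (Fpot μ α h ξ') *
            (⟪ξ - ξ', h x⟫ * (1 + α * ⟪ξ', h x⟫) ^ (-(1/α) - 1))) := by
      ring
    rw [hcalc, div_self (hBpos x).ne', one_mul]
  have hIW : ∫ x, w x ∂μ = ⟪Dφ ξ', ξ - ξ'⟫ * Fint μ α h ξ' := by
    rw [hI2, hexpφ]
    field_simp
  set T : ℝ := 1 + α * ⟪Dφ ξ', ξ - ξ'⟫ with hTdef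
  have hsum : ∫ x, (f x + α * w x) ∂μ = Fint μ α h ξ' * T := by
    rw [integral_add (hfin ξ' hξ') (hint_w.const_mul α), integral_const_mul, hIW]
    have h2 : (∫ a, (1 + α * ⟪ξ', h a⟫) ^ (-(1/α)) ∂μ) = Fint μ α h ξ' := rfl
    rw [h2, hTdef]
    ring
  have hTpos : 0 < T := by
    have hip : 0 < ∫ x, (f x + α * w x) ∂μ := by
      rw [integral_pos_iff_support_of_nonneg (fun x => (hfgpos x).le) hint_fg]
      have hs : (Function.support fun x => f x + α * w x) = Set.univ := by
        ext x; simp [Function.support, (hfgpos x).ne']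
      simp [hs]
    rw [hsum] at hip
    nlinarith [hFintpos]
  have hmain : (∫ x, Fdens μ α h ξ' x ^ (1 + α) * Fdens μ α h ξ x ^ (1 - (1 + α)) ∂μ)
      = Real.exp K * (Fint μ α h ξ' * T) := by
    rw [← hsum, show (∫ x, Fdens μ α h ξ' x ^ (1 + α) *
        Fdens μ α h ξ x ^ (1 - (1 + α)) ∂μ)
        = ∫ x, Real.exp K * (f x + α * w x) ∂μ from
      integral_congr_ae (Filter.Eventually.of_forall key)]
    exact integral_const_mul _ _
  rw [hmain, Real.log_mul (Real.exp_ne_zero K)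
      (mul_pos hFintpos hTpos).ne', Real.log_exp,
    Real.log_mul hFintpos.ne' hTpos.ne']
  have hlogF : Real.log (Fint μ α h ξ') = -Fpot μ α h ξ' := by
    rw [Fpot]; ring
  rw [hlogF, hKdef]
  have : (1 + α) - 1 = α := by ring
  rw [this]
  field_simp
  ring
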